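/- Suppose f : ℝⁿ → ℝ is continuously differentiable and λ-strongly convex with L-Lipschitz gradient (0 < λ, L), μ > 0, φ(x) = f(x) + μ‖x‖₁, and x⋆ is a global minimizer of φ. If a sequence {x^k} ⊂ ℝⁿ satisfies φ(x^{k+1}) ≤ Γ(x^k) for every k ≥ 0, then for all k ≥ 0 one has φ(x^k) − φ(x⋆) ≤ (1 − λ/L)^k (φ(x⁰) − φ(x⋆)); in particular φ(x^k) converges to φ(x⋆) at a linear rate. -/

import Mathlib

open scoped InnerProductSpace

open Filter Topology


lemma grad_lower {n : ℕ} (f : EuclideanSpace ℝ (Fin n) → ℝ) (lam : ℝ)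
    (hf : ContDiff ℝ 1 f)
    (hsc : ∀ x y : EuclideanSpace ℝ (Fin n), ∀ t ∈ Set.Icc (0:ℝ) 1,
      f (t • x + (1 - t) • y)
        ≤ t * f x + (1 - t) * f y - lam / 2 * t * (1 - t) * ‖x - y‖ ^ 2)
    (x y : EuclideanSpace ℝ (Fin n)) :
    f x + ⟪gradient f x, y - x⟫_ℝ + lam / 2 * ‖y - x‖ ^ 2 ≤ f y := by
  set v := y - x with hv
  set g : ℝ → ℝ := fun t => f (x + t • v) with hg
  have hgrad : HasGradientAt f (gradient f x) x :=
    ((hf.differentiable one_ne_zero) x).hasGradientAt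
  have hline : HasDerivAt (fun t : ℝ => x + t • v) v 0 := by
    simpa using ((hasDerivAt_id (0:ℝ)).smul_const v).const_add x
  have hgrad' : HasFDerivAt f ((InnerProductSpace.toDual ℝ _) (gradient f x))
      (x + (0:ℝ) • v) := by simpa using hgrad.hasFDerivAt
  have hd : HasDerivAt g ⟪gradient f x, v⟫_ℝ 0 := by
    have := hgrad'.comp_hasDerivAt 0 hline
    exact this
  have hslope : Tendsto (slope g 0) (𝓝[>] (0:ℝ)) (𝓝 ⟪gradient f x, v⟫_ℝ) :=
    ((hasDerivAt_iff_tendsto_slope.1 hd).mono_left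
      (nhdsWithin_mono 0 (fun t ht => ne_of_gt ht)))
  have hrhs : Tendsto (fun t : ℝ => f y - f x - lam / 2 * (1 - t) * ‖y - x‖ ^ 2)
      (𝓝[>] (0:ℝ)) (𝓝 (f y - f x - lam / 2 * ‖y - x‖ ^ 2)) := by
    have : Continuous (fun t : ℝ => f y - f x - lam / 2 * (1 - t) * ‖y - x‖ ^ 2) := by
      continuity
    have h2 := (this.tendsto 0).mono_left (nhdsWithin_le_nhds (s := Set.Ioi (0:ℝ)))
    simpa using h2
  have hev : ∀ᶠ t in 𝓝[>] (0:ℝ),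
      slope g 0 t ≤ f y - f x - lam / 2 * (1 - t) * ‖y - x‖ ^ 2 := by
    filter_upwards [Ioo_mem_nhdsGT_of_mem (by norm_num : (0:ℝ) ∈ Set.Ico 0 1)] with t ht
    have ht0 : 0 < t := ht.1
    have ht1 : t < 1 := ht.2
    have key := hsc y x t ⟨le_of_lt ht0, le_of_lt ht1⟩
    have hpt : x + t • v = t • y + (1 - t) • x := by
      simp [hv, smul_sub, sub_smul]; abel
    have hgle : g t ≤ t * f y + (1 - t) * f x - lam / 2 * t * (1 - t) * ‖y - x‖ ^ 2 := by
      rw [hg]; simp only [hpt]; exact key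
    have hgt : g 0 = f x := by simp [hg]
    rw [slope_def_field, sub_zero, div_le_iff₀ ht0, hgt]
    nlinarith [hgle]
  have := le_of_tendsto_of_tendsto hslope hrhs hev
  have hvv : ⟪gradient f x, v⟫_ℝ = ⟪gradient f x, y - x⟫_ℝ := by rw [hv]
  linarith [hvv ▸ this]


/-- Linear convergence of the objective values for any sequence whose
next iterate improves on the ISTA majorization value `Γ(x^k)` (the infimum of the
proximal model at `x^k`). -/
theorem stmt_0 {n : ℕ} (hn : 0 < n)
    (f : EuclideanSpace ℝ (Fin n) → ℝ)
    (lam L mu : ℝ) (hlam : 0 < lam) (hL : 0 < L) (hmu : 0 < mu)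
    (hf : ContDiff ℝ 1 f)
    (hsc : ∀ x y : EuclideanSpace ℝ (Fin n), ∀ t ∈ Set.Icc (0:ℝ) 1,
      f (t • x + (1 - t) • y)
        ≤ t * f x + (1 - t) * f y - lam / 2 * t * (1 - t) * ‖x - y‖ ^ 2)
    (hlip : ∀ x y : EuclideanSpace ℝ (Fin n),
      ‖gradient f x - gradient f y‖ ≤ L * ‖x - y‖)
    (φ : EuclideanSpace ℝ (Fin n) → ℝ)
    (hφ : ∀ x, φ x = f x + mu * ∑ i, |x i|)
    (Γ : EuclideanSpace ℝ (Fin n) → ℝ)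
    (hΓ : ∀ x, Γ x = ⨅ y : EuclideanSpace ℝ (Fin n),
      (f x + ⟪gradient f x, y - x⟫_ℝ + L / 2 * ‖y - x‖ ^ 2 + mu * ∑ i, |y i|))
    (xstar : EuclideanSpace ℝ (Fin n)) (hmin : ∀ y, φ xstar ≤ φ y)
    (x : ℕ → EuclideanSpace ℝ (Fin n))
    (hseq : ∀ k : ℕ, φ (x (k + 1)) ≤ Γ (x k)) :
    ∀ k : ℕ, φ (x k) - φ xstar ≤ (1 - lam / L) ^ k * (φ (x 0) - φ xstar) := by
  have hgl := grad_lower f lam hf hsc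
  -- lam ≤ L
  have hlamL : lam ≤ L := by
    set u : EuclideanSpace ℝ (Fin n) := EuclideanSpace.single ⟨0, hn⟩ 1 with hu
    have hnu : ‖u‖ = 1 := by simp [hu, EuclideanSpace.norm_single]
    have h1 := hgl 0 u
    have h2 := hgl u 0
    have hn1 : ‖u - 0‖ = 1 := by simpa using hnu
    have hn2 : ‖(0:EuclideanSpace ℝ (Fin n)) - u‖ = 1 := by
      rw [norm_sub_rev]; simpa using hnu
    rw [hn1] at h1; rw [hn2] at h2
    have hi1 : ⟪gradient f 0, u - 0⟫_ℝ = ⟪gradient f 0, u⟫_ℝ := by rw [sub_zero]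
    have hi2 : ⟪gradient f u, 0 - u⟫_ℝ = -⟪gradient f u, u⟫_ℝ := by
      rw [zero_sub, inner_neg_right]
    rw [hi1] at h1; rw [hi2] at h2
    have hsum : lam ≤ ⟪gradient f u, u⟫_ℝ - ⟪gradient f 0, u⟫_ℝ := by nlinarith
    have : ⟪gradient f u, u⟫_ℝ - ⟪gradient f 0, u⟫_ℝ
        = ⟪gradient f u - gradient f 0, u⟫_ℝ := by rw [inner_sub_left]
    have hcs : ⟪gradient f u - gradient f 0, u⟫_ℝ
        ≤ ‖gradient f u - gradient f 0‖ * ‖u‖ := real_inner_le_norm _ _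
    have hlipu := hlip u 0
    rw [hn1] at hlipu
    calc lam ≤ ⟪gradient f u - gradient f 0, u⟫_ℝ := by rw [← this]; exact hsum
      _ ≤ ‖gradient f u - gradient f 0‖ * ‖u‖ := hcs
      _ = ‖gradient f u - gradient f 0‖ := by rw [hnu, mul_one]
      _ ≤ L * 1 := hlipu
      _ = L := mul_one L
  set t : ℝ := lam / L with htdef
  have ht0 : 0 < t := div_pos hlam hL
  have ht1 : t ≤ 1 := (div_le_one hL).2 hlamL
  have hLt : L * t = lam := by rw [htdef]; field_simp
  -- one-step contraction
  have hstep : ∀ k : ℕ, φ (x (k + 1)) - φ xstar ≤ (1 - t) * (φ (x k) - φ xstar) := by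
    intro k
    set a := x k with ha
    set y₀ : EuclideanSpace ℝ (Fin n) := t • xstar + (1 - t) • a with hy₀
    -- Γ a ≤ model y₀
    have hbdd : BddBelow (Set.range fun y : EuclideanSpace ℝ (Fin n) =>
        f a + ⟪gradient f a, y - a⟫_ℝ + L / 2 * ‖y - a‖ ^ 2 + mu * ∑ i, |y i|) := by
      refine ⟨f a - ‖gradient f a‖ ^ 2 / (2 * L), ?_⟩
      rintro _ ⟨y, rfl⟩
      have hip : -(‖gradient f a‖ * ‖y - a‖) ≤ ⟪gradient f a, y - a⟫_ℝ :=
        (abs_le.1 (abs_real_inner_le_norm _ _)).1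
      have hsum : (0:ℝ) ≤ ∑ i, |y i| := Finset.sum_nonneg fun i _ => abs_nonneg _
      have hq : ‖gradient f a‖ * ‖y - a‖ - L / 2 * ‖y - a‖ ^ 2
          ≤ ‖gradient f a‖ ^ 2 / (2 * L) := by
        rw [le_div_iff₀ (by positivity : (0:ℝ) < 2 * L)]
        nlinarith [sq_nonneg (L * ‖y - a‖ - ‖gradient f a‖)]
      nlinarith [mul_nonneg hmu.le hsum]
    have hΓle : Γ a ≤ f a + ⟪gradient f a, y₀ - a⟫_ℝ + L / 2 * ‖y₀ - a‖ ^ 2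
        + mu * ∑ i, |y₀ i| := by
      rw [hΓ a]; exact ciInf_le hbdd y₀
    -- model y₀ ≤ φ y₀ + (L - lam)/2 ‖y₀ - a‖²
    have hmodel : f a + ⟪gradient f a, y₀ - a⟫_ℝ + L / 2 * ‖y₀ - a‖ ^ 2
        + mu * ∑ i, |y₀ i| ≤ φ y₀ + (L - lam) / 2 * ‖y₀ - a‖ ^ 2 := by
      have := hgl a y₀
      rw [hφ y₀]; nlinarith [sq_nonneg ‖y₀ - a‖]
    -- ‖y₀ - a‖ = t ‖xstar - a‖
    have hna : ‖y₀ - a‖ = t * ‖xstar - a‖ := by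
      have : y₀ - a = t • (xstar - a) := by
        rw [hy₀]; simp [smul_sub, sub_smul]; abel
      rw [this, norm_smul, Real.norm_eq_abs, abs_of_pos ht0]
    -- φ strongly convex step
    have hphiconv : φ y₀ ≤ t * φ xstar + (1 - t) * φ a
        - lam / 2 * t * (1 - t) * ‖xstar - a‖ ^ 2 := by
      have hfc := hsc xstar a t ⟨ht0.le, ht1⟩
      have hl1 : ∑ i, |y₀ i| ≤ t * ∑ i, |xstar i| + (1 - t) * ∑ i, |a i| := by
        rw [Finset.mul_sum, Finset.mul_sum, ← Finset.sum_add_distrib]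
        refine Finset.sum_le_sum fun i _ => ?_
        have : y₀ i = t * xstar i + (1 - t) * a i := by
          simp [hy₀, PiLp.add_apply, PiLp.smul_apply, smul_eq_mul]
        rw [this]
        calc |t * xstar i + (1 - t) * a i| ≤ |t * xstar i| + |(1 - t) * a i| := abs_add_le _ _
          _ = t * |xstar i| + (1 - t) * |a i| := by
            rw [abs_mul, abs_mul, abs_of_pos ht0, abs_of_nonneg (by linarith : (0:ℝ) ≤ 1 - t)]
      rw [hφ y₀, hφ xstar, hφ a]
      nlinarith [mul_le_mul_of_nonneg_left hl1 hmu.le]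
    -- combine
    have hfinal : Γ a ≤ t * φ xstar + (1 - t) * φ a := by
      have hcoef : (L - lam) / 2 * ‖y₀ - a‖ ^ 2 - lam / 2 * t * (1 - t) * ‖xstar - a‖ ^ 2
          = (t / 2 * (L * t - lam)) * ‖xstar - a‖ ^ 2 := by
        rw [hna]; ring
      have hzero : t / 2 * (L * t - lam) = 0 := by rw [hLt]; ring
      calc Γ a ≤ f a + ⟪gradient f a, y₀ - a⟫_ℝ + L / 2 * ‖y₀ - a‖ ^ 2
          + mu * ∑ i, |y₀ i| := hΓle
        _ ≤ φ y₀ + (L - lam) / 2 * ‖y₀ - a‖ ^ 2 := hmodel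
        _ ≤ t * φ xstar + (1 - t) * φ a
            - lam / 2 * t * (1 - t) * ‖xstar - a‖ ^ 2
            + (L - lam) / 2 * ‖y₀ - a‖ ^ 2 := by linarith
        _ = t * φ xstar + (1 - t) * φ a + (t / 2 * (L * t - lam)) * ‖xstar - a‖ ^ 2 := by
            rw [← hcoef]; ring
        _ = t * φ xstar + (1 - t) * φ a := by rw [hzero]; ring
    have hs := hseq k
    rw [← ha] at hs
    calc φ (x (k + 1)) - φ xstar ≤ Γ a - φ xstar := by linarith
      _ ≤ t * φ xstar + (1 - t) * φ a - φ xstar := by linarith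
      _ = (1 - t) * (φ a - φ xstar) := by ring
  -- induction
  intro k
  induction k with
  | zero => simp
  | succ k ih =>
    have h1t : (0:ℝ) ≤ 1 - t := by linarith
    calc φ (x (k + 1)) - φ xstar ≤ (1 - t) * (φ (x k) - φ xstar) := hstep k
      _ ≤ (1 - t) * ((1 - lam / L) ^ k * (φ (x 0) - φ xstar)) :=
          mul_le_mul_of_nonneg_left ih h1t
      _ = (1 - lam / L) ^ (k + 1) * (φ (x 0) - φ xstar) := by
          rw [htdef]; ring
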